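/- arXiv:2404.04301 — 3 statements merged into one kernel-verified Lean document; each statement's English description precedes it below -/
import Mathlib

section
/- The function h(x) = ln(erfc(x)) is concave on the whole real line, where erfc(x) = 1 - (2/√π)∫₀ˣ exp(-t²)dt. -/
open Real MeasureTheory Set Filter

noncomputable def erfc (x : ℝ) : ℝ :=
  1 - (2 / Real.sqrt Real.pi) * ∫ t in (0:ℝ)..x, Real.exp (-t ^ 2)

lemma contg : Continuous fun t : ℝ => Real.exp (-t ^ 2) := by
  fun_prop

lemma intg : Integrable (fun t : ℝ => Real.exp (-t ^ 2)) := by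
  simpa using integrable_exp_neg_mul_sq (one_pos)

lemma hasDerivAt_erfc (x : ℝ) :
    HasDerivAt erfc (-(2 / Real.sqrt Real.pi * Real.exp (-x ^ 2))) x := by
  have h1 : HasDerivAt (fun u : ℝ => ∫ t in (0:ℝ)..u, Real.exp (-t ^ 2))
      (Real.exp (-x ^ 2)) x := (contg.integral_hasStrictDerivAt 0 x).hasDerivAt
  have := ((hasDerivAt_const x (1:ℝ)).sub (h1.const_mul (2 / Real.sqrt Real.pi)))
  unfold erfc; simpa [Pi.sub_def] using this

lemma tail_eq {x : ℝ} (hx : 0 < x) :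
    erfc x = (2 / Real.sqrt Real.pi) * ∫ t in Ioi x, Real.exp (-t ^ 2) := by
  have h1 : (∫ t in Ioc (0:ℝ) x, Real.exp (-t ^ 2)) + ∫ t in Ioi x, Real.exp (-t ^ 2)
      = ∫ t in Ioi (0:ℝ), Real.exp (-t ^ 2) := by
    rw [← setIntegral_union (Ioc_disjoint_Ioi le_rfl) measurableSet_Ioi
      intg.integrableOn intg.integrableOn, Ioc_union_Ioi_eq_Ioi hx.le]
  have h2 : ∫ t in Ioi (0:ℝ), Real.exp (-t ^ 2) = Real.sqrt Real.pi / 2 := by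
    simpa using integral_gaussian_Ioi 1
  have hs : Real.sqrt Real.pi ≠ 0 := by positivity
  rw [erfc, intervalIntegral.integral_of_le hx.le]
  rw [h2] at h1
  field_simp
  linarith [h1]

lemma tail_pos (x : ℝ) : 0 < ∫ t in Ioi x, Real.exp (-t ^ 2) := by
  rw [setIntegral_pos_iff_support_of_nonneg_ae
      (Filter.Eventually.of_forall fun t => (Real.exp_pos _).le) intg.integrableOn]
  have : Function.support (fun t : ℝ => Real.exp (-t ^ 2)) = univ := by
    ext t; simp [Function.support, (Real.exp_pos _).ne']
  rw [this, univ_inter]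
  simp

lemma erfc_pos (x : ℝ) : 0 < erfc x := by
  rcases le_or_gt x 0 with hx | hx
  · have h1 : (∫ t in (0:ℝ)..x, Real.exp (-t ^ 2)) ≤ 0 := by
      rw [intervalIntegral.integral_of_ge hx, neg_nonpos]
      exact setIntegral_nonneg measurableSet_Ioc fun t _ => (Real.exp_pos _).le
    have hc : (0:ℝ) ≤ 2 / Real.sqrt Real.pi := by positivity
    have := mul_nonpos_of_nonneg_of_nonpos hc h1
    rw [erfc]; linarith
  · rw [tail_eq hx]
    have := tail_pos x
    positivity

lemma tee_integrable {x : ℝ} (hx : 0 < x) :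
    IntegrableOn (fun t : ℝ => t * Real.exp (-t ^ 2)) (Ioi x) := by
  apply integrableOn_Ioi_deriv_of_nonneg' (g := fun t : ℝ => -Real.exp (-t ^ 2) / 2)
  · intro t _
    have h := (((hasDerivAt_pow 2 t).neg).exp).neg.div_const 2
    exact h.congr_deriv (by simp only [Pi.neg_apply]; ring)
  · intro t ht
    have : (0:ℝ) < t := lt_trans hx ht
    positivity
  · have h : Tendsto (fun t : ℝ => -t ^ 2) atTop atBot := by
      apply tendsto_neg_atBot_iff.mpr
      exact tendsto_pow_atTop two_ne_zero
    have := (Real.tendsto_exp_atBot.comp h).neg.div_const (2:ℝ)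
    simpa using this

lemma tee_integral {x : ℝ} (hx : 0 < x) :
    ∫ t in Ioi x, t * Real.exp (-t ^ 2) = Real.exp (-x ^ 2) / 2 := by
  have h := integral_Ioi_of_hasDerivAt_of_tendsto' (a := x)
    (f := fun t : ℝ => -Real.exp (-t ^ 2) / 2)
    (f' := fun t : ℝ => t * Real.exp (-t ^ 2))
    (fun t _ => by
      have h := (((hasDerivAt_pow 2 t).neg).exp).neg.div_const 2
      exact h.congr_deriv (by simp only [Pi.neg_apply]; ring))
    (tee_integrable hx)
    (by
      have h : Tendsto (fun t : ℝ => -t ^ 2) atTop atBot :=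
        tendsto_neg_atBot_iff.mpr (tendsto_pow_atTop two_ne_zero)
      have := (Real.tendsto_exp_atBot.comp h).neg.div_const (2:ℝ)
      simpa using this)
  rw [h]; ring

lemma key_ineq (x : ℝ) : x * erfc x ≤ Real.exp (-x ^ 2) / Real.sqrt Real.pi := by
  rcases le_or_gt x 0 with hx | hx
  · have := erfc_pos x
    have h1 : x * erfc x ≤ 0 := mul_nonpos_of_nonpos_of_nonneg hx this.le
    have h2 : (0:ℝ) ≤ Real.exp (-x ^ 2) / Real.sqrt Real.pi := by positivity
    linarith
  · have hcomp : (∫ t in Ioi x, Real.exp (-t ^ 2))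
        ≤ ∫ t in Ioi x, (t / x) * Real.exp (-t ^ 2) := by
      apply setIntegral_mono_on intg.integrableOn
      · have := (tee_integrable hx).div_const x
        apply this.congr
        exact Filter.Eventually.of_forall fun t => by ring
      · exact measurableSet_Ioi
      · intro t ht
        have h1 : (1:ℝ) ≤ t / x := (one_le_div hx).mpr (le_of_lt ht)
        nlinarith [Real.exp_pos (-t ^ 2)]
    have h2 : ∫ t in Ioi x, (t / x) * Real.exp (-t ^ 2)
        = Real.exp (-x ^ 2) / (2 * x) := by
      have : ∀ t : ℝ, (t / x) * Real.exp (-t ^ 2) = (1 / x) * (t * Real.exp (-t ^ 2)) := by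
        intro t; ring
      simp_rw [this]
      rw [integral_const_mul, tee_integral hx]
      field_simp
    rw [h2] at hcomp
    rw [tail_eq hx]
    have hs : (0:ℝ) < Real.sqrt Real.pi := Real.sqrt_pos.mpr Real.pi_pos
    calc x * ((2 / Real.sqrt Real.pi) * ∫ t in Ioi x, Real.exp (-t ^ 2))
        ≤ x * ((2 / Real.sqrt Real.pi) * (Real.exp (-x ^ 2) / (2 * x))) := by
          gcongr
        _ = Real.exp (-x ^ 2) / Real.sqrt Real.pi := by
          field_simp

lemma hasDerivAt_log_erfc (x : ℝ) :
    HasDerivAt (fun x : ℝ => Real.log (erfc x))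
      (-(2 / Real.sqrt Real.pi * Real.exp (-x ^ 2)) / erfc x) x :=
  (hasDerivAt_erfc x).log (erfc_pos x).ne'

lemma deriv_log_erfc :
    deriv (fun x : ℝ => Real.log (erfc x))
      = fun x : ℝ => -(2 / Real.sqrt Real.pi * Real.exp (-x ^ 2)) / erfc x :=
  funext fun x => (hasDerivAt_log_erfc x).deriv

lemma hasDerivAt_ratio (x : ℝ) :
    HasDerivAt (fun x : ℝ => -(2 / Real.sqrt Real.pi * Real.exp (-x ^ 2)) / erfc x)
      ((-(2 / Real.sqrt Real.pi * (Real.exp (-x ^ 2) * -(2 * x ^ 1))) * erfc x -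
        -(2 / Real.sqrt Real.pi * Real.exp (-x ^ 2)) *
          -(2 / Real.sqrt Real.pi * Real.exp (-x ^ 2))) / erfc x ^ 2) x := by
  have hnum : HasDerivAt (fun x : ℝ => -(2 / Real.sqrt Real.pi * Real.exp (-x ^ 2)))
      (-(2 / Real.sqrt Real.pi * (Real.exp (-x ^ 2) * -(2 * x ^ 1)))) x :=
    (((hasDerivAt_pow 2 x).neg.exp).const_mul (2 / Real.sqrt Real.pi)).neg
  exact hnum.div (hasDerivAt_erfc x) (erfc_pos x).ne'

theorem log_erfc_concave :
    ConcaveOn ℝ Set.univ (fun x : ℝ => Real.log (erfc x)) := by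
  apply concaveOn_of_deriv2_nonpos convex_univ
  · exact fun x _ => ((hasDerivAt_log_erfc x).continuousAt).continuousWithinAt
  · rw [interior_univ]
    exact fun x _ => ((hasDerivAt_log_erfc x).differentiableAt).differentiableWithinAt
  · rw [interior_univ, deriv_log_erfc]
    exact fun x _ => ((hasDerivAt_ratio x).differentiableAt).differentiableWithinAt
  · rw [interior_univ]
    intro x _
    have h2 : deriv^[2] (fun x : ℝ => Real.log (erfc x)) x
        = deriv (deriv fun x : ℝ => Real.log (erfc x)) x := rfl
    rw [h2, deriv_log_erfc, (hasDerivAt_ratio x).deriv]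
    apply div_nonpos_of_nonpos_of_nonneg _ (sq_nonneg _)
    have hs : (0:ℝ) < Real.sqrt Real.pi := Real.sqrt_pos.mpr Real.pi_pos
    have hsq : Real.sqrt Real.pi ^ 2 = Real.pi := Real.sq_sqrt Real.pi_pos.le
    have hk : x * erfc x * Real.sqrt Real.pi ≤ Real.exp (-x ^ 2) := by
      have := (le_div_iff₀ hs).mp (key_ineq x)
      linarith
    have he := Real.exp_pos (-x ^ 2)
    have hpi := Real.pi_pos
    have hrw : -(2 / Real.sqrt Real.pi * (Real.exp (-x ^ 2) * -(2 * x ^ 1))) * erfc x -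
        -(2 / Real.sqrt Real.pi * Real.exp (-x ^ 2)) *
          -(2 / Real.sqrt Real.pi * Real.exp (-x ^ 2))
        = (4 * Real.exp (-x ^ 2) / Real.pi) *
            (x * erfc x * Real.sqrt Real.pi - Real.exp (-x ^ 2)) := by
      generalize Real.sqrt Real.pi = s at hsq hs ⊢
      rw [← hsq]
      field_simp
      ring
    rw [hrw]
    apply mul_nonpos_of_nonneg_of_nonpos (by positivity)
    linarith
end

section
/- The function g(x) = -x² - ln(√π·x) + ln(1 - 1/(2x²)) is concave on the interval (1/√2, ∞). -/
open Real Set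

lemma approx_facts {x : ℝ} (hx : x ∈ Set.Ioi (1 / Real.sqrt 2)) :
    0 < x ∧ 0 < 2 * x ^ 2 - 1 := by
  have h2 : (0:ℝ) < Real.sqrt 2 := Real.sqrt_pos.2 (by norm_num)
  have hx0 : 0 < x := lt_trans (by positivity) hx
  refine ⟨hx0, ?_⟩
  have hxx : 1 / Real.sqrt 2 < x := hx
  have hsq : (1 / Real.sqrt 2) ^ 2 < x ^ 2 :=
    pow_lt_pow_left₀ hxx (by positivity) (by norm_num)
  have h22 : (1 / Real.sqrt 2) ^ 2 = 1 / 2 := by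
    rw [div_pow, one_pow, Real.sq_sqrt (by norm_num : (0:ℝ) ≤ 2)]
  rw [h22] at hsq
  linarith

theorem approx_concave :
    ConcaveOn ℝ (Set.Ioi (1 / Real.sqrt 2))
      (fun x : ℝ => -x ^ 2 - Real.log (Real.sqrt Real.pi * x)
        + Real.log (1 - 1 / (2 * x ^ 2))) := by
  set f : ℝ → ℝ := fun x : ℝ => -x ^ 2 - Real.log (Real.sqrt Real.pi * x)
        + Real.log (1 - 1 / (2 * x ^ 2)) with hf
  set f' : ℝ → ℝ := fun x : ℝ => -(2*x) - 1/x + 2/(x*(2*x^2-1)) with hf'def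
  set f'' : ℝ → ℝ := fun x : ℝ => -2 + 1/x^2 - 2*(6*x^2-1)/(x*(2*x^2-1))^2 with hf''def
  have hpi : (0:ℝ) < Real.sqrt Real.pi := Real.sqrt_pos.2 Real.pi_pos
  have hd1 : ∀ x ∈ Set.Ioi (1 / Real.sqrt 2), HasDerivAt f (f' x) x := by
    intro x hx
    obtain ⟨hx0, hx1⟩ := approx_facts hx
    have hxne : x ≠ 0 := ne_of_gt hx0
    have hu : (1 : ℝ) - 1 / (2 * x ^ 2) = (2*x^2-1) / (2*x^2) := by
      field_simp
    have hune : (1 : ℝ) - 1 / (2 * x ^ 2) ≠ 0 := by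
      rw [hu]; positivity
    have hden : (2 : ℝ) * x ^ 2 ≠ 0 := by positivity
    have h1 : HasDerivAt (fun x : ℝ => -x^2) (-(2*x)) x := by
      have := (hasDerivAt_pow 2 x).neg
      norm_num at this
      exact this
    have hne2 : (2:ℝ)*x^2-1 ≠ 0 := ne_of_gt hx1
    have h2 : HasDerivAt (fun y : ℝ => Real.log (Real.sqrt Real.pi * y))
        (Real.sqrt Real.pi * 1 / (Real.sqrt Real.pi * x)) x := by
      have h := ((hasDerivAt_id x).const_mul (Real.sqrt Real.pi)).log
        (by simpa using mul_ne_zero (ne_of_gt hpi) hxne)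
      simpa using h
    have h3 : HasDerivAt (fun y : ℝ => Real.log (1 - 1 / (2 * y ^ 2)))
        (2/(x*(2*x^2-1))) x := by
      have h := (((hasDerivAt_const x (1:ℝ)).div ((hasDerivAt_pow 2 x).const_mul 2)
        hden).const_sub 1).log hune
      convert h using 1
      · rfl
      simp only [Pi.div_apply]
      rw [hu]
      push_cast
      field_simp
      ring
    have := (h1.sub h2).add h3
    convert this using 1
    iterate 3 exact rfl
    rw [hf'def]
    have hpine : Real.sqrt Real.pi ≠ 0 := ne_of_gt hpi
    field_simp
  have hd2 : ∀ x ∈ Set.Ioi (1 / Real.sqrt 2), HasDerivAt f' (f'' x) x := by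
    intro x hx
    obtain ⟨hx0, hx1⟩ := approx_facts hx
    have hxne : x ≠ 0 := ne_of_gt hx0
    have hgne : x * (2*x^2-1) ≠ 0 := by positivity
    have h1 : HasDerivAt (fun x : ℝ => -(2*x)) (-(2*1)) x :=
      ((hasDerivAt_id x).const_mul 2).neg
    have h2 : HasDerivAt (fun x : ℝ => 1/x) (-(1/x^2)) x := by
      simpa [one_div] using hasDerivAt_inv hxne
    have h3 := (hasDerivAt_const x (2:ℝ)).div
      ((hasDerivAt_id x).mul (((hasDerivAt_pow 2 x).const_mul 2).sub_const 1)) hgne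
    have := (h1.sub h2).add h3
    convert this using 1
    iterate 3 exact rfl
    rw [hf''def]
    simp only [id_eq]
    norm_num
    field_simp
    ring
  have hint : interior (Set.Ioi (1 / Real.sqrt 2)) = Set.Ioi (1 / Real.sqrt 2) :=
    interior_Ioi
  apply concaveOn_of_hasDerivWithinAt2_nonpos (f' := f') (f'' := f'') (convex_Ioi _)
  · intro x hx
    exact (hd1 x hx).continuousAt.continuousWithinAt
  · rw [hint]; intro x hx
    exact (hd1 x hx).hasDerivWithinAt
  · rw [hint]; intro x hx
    exact (hd2 x hx).hasDerivWithinAt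
  · rw [hint]; intro x hx
    obtain ⟨hx0, hx1⟩ := approx_facts hx
    have key : 0 < 8*x^6 - 12*x^4 + 18*x^2 - 3 := by
      nlinarith [sq_nonneg (2*x^2-1), sq_nonneg x, mul_pos hx1 hx1, mul_pos (mul_pos hx1 hx1) hx1]
    have hxne : x ≠ 0 := ne_of_gt hx0
    have hgne : x * (2*x^2-1) ≠ 0 := by positivity
    have heq : f'' x = -(8*x^6 - 12*x^4 + 18*x^2 - 3)/(x*(2*x^2-1))^2 := by
      rw [hf''def]
      field_simp
      ring
    rw [heq]
    apply div_nonpos_of_nonpos_of_nonneg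
    · linarith
    · positivity
end

section
/- Let σ² > 0, γ > 0, η > 0, r ∈ ℝ, and V = σ² + γ + η. Then ∫₀^∞ ∫_{-∞}^∞ exp(-(r - u + v)²/(2σ²) - u²/(2γ) - v²/(2η)) du dv = π·σ·√(γη)/√V · exp(-r²/(2V)) · erfc(√η · r / √(2(γ+σ²)V)). -/
open MeasureTheory

open Set Real

/-- Translated Gaussian integral over ℝ. -/
lemma gauss_shift (α m : ℝ) (hα : 0 < α) :
    ∫ u : ℝ, Real.exp (-α * (u - m) ^ 2) = Real.sqrt (Real.pi / α) := by
  have h := integral_add_right_eq_self (μ := (volume : Measure ℝ))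
      (fun u => Real.exp (-α * u ^ 2)) (-m)
  simp only [← sub_eq_add_neg] at h
  rw [h, integral_gaussian]

/-- Translation of an integral over `Ioi`. -/
lemma integral_comp_add_right_Ioi (g : ℝ → ℝ) (a d : ℝ) :
    ∫ x in Ioi a, g (x + d) = ∫ x in Ioi (a + d), g x := by
  rw [← integral_indicator measurableSet_Ioi, ← integral_indicator measurableSet_Ioi,
    ← integral_add_right_eq_self (μ := (volume : Measure ℝ))
      (Set.indicator (Ioi (a + d)) g) d]
  congr 1
  ext x
  simp only [Set.indicator_apply, Set.mem_Ioi, add_lt_add_iff_right]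

/-- Tail Gaussian integral in terms of erfc. -/
lemma integral_exp_neg_sq_Ioi (c : ℝ) :
    ∫ t in Ioi c, Real.exp (-t ^ 2) = Real.sqrt Real.pi / 2 * erfc c := by
  have hint : Integrable (fun t : ℝ => Real.exp (-t ^ 2)) := by
    simpa using integrable_exp_neg_mul_sq (b := 1) one_pos
  have key : ∀ x : ℝ, ∫ t in Ioi x, Real.exp (-t ^ 2)
      = (∫ t : ℝ, Real.exp (-t ^ 2)) - ∫ t in Iic x, Real.exp (-t ^ 2) := by
    intro x
    have := integral_add_compl (measurableSet_Iic (a := x)) hint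
    rw [compl_Iic] at this
    linarith [this]
  have h2 : (∫ t in Iic c, Real.exp (-t ^ 2)) - ∫ t in Iic (0:ℝ), Real.exp (-t ^ 2)
      = ∫ t in (0:ℝ)..c, Real.exp (-t ^ 2) :=
    intervalIntegral.integral_Iic_sub_Iic hint.integrableOn hint.integrableOn
  have h0 : ∫ t in Ioi (0:ℝ), Real.exp (-t ^ 2) = Real.sqrt Real.pi / 2 := by
    simpa using integral_gaussian_Ioi 1
  have hc : ∫ t in Ioi c, Real.exp (-t ^ 2)
      = Real.sqrt Real.pi / 2 - ∫ t in (0:ℝ)..c, Real.exp (-t ^ 2) := by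
    rw [key c, ← h2]
    have := key 0
    rw [h0] at this
    linarith
  rw [hc, erfc]
  have hπ : 0 < Real.sqrt Real.pi := Real.sqrt_pos.mpr Real.pi_pos
  field_simp

/-- Half-line Gaussian with shift and variance, in terms of erfc. -/
lemma gauss_half (s c : ℝ) (hs : 0 < s) :
    ∫ v in Ioi (0:ℝ), Real.exp (-(v + c) ^ 2 / (2 * s))
      = Real.sqrt (2 * s) * (Real.sqrt Real.pi / 2)
        * erfc (c / Real.sqrt (2 * s)) := by
  set k := Real.sqrt (2 * s) with hk
  have hkpos : 0 < k := Real.sqrt_pos.mpr (by linarith)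
  have hk2 : k ^ 2 = 2 * s := Real.sq_sqrt (by linarith)
  have step1 : ∀ x : ℝ, Real.exp (-(x : ℝ) ^ 2 / (2 * s))
      = Real.exp (-(x / k) ^ 2) := by
    intro x
    congr 1
    rw [div_pow, hk2]
    ring
  calc ∫ v in Ioi (0:ℝ), Real.exp (-(v + c) ^ 2 / (2 * s))
      = ∫ v in Ioi c, Real.exp (-v ^ 2 / (2 * s)) := by
        simpa using integral_comp_add_right_Ioi (fun v => Real.exp (-v ^ 2 / (2 * s))) 0 c
    _ = ∫ v in Ioi c, Real.exp (-(v * k⁻¹) ^ 2) := by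
        refine setIntegral_congr_fun measurableSet_Ioi fun x _ => ?_
        rw [step1 x, div_eq_mul_inv]
    _ = k * ∫ t in Ioi (c / k), Real.exp (-t ^ 2) := by
        rw [integral_comp_mul_right_Ioi (fun t => Real.exp (-t ^ 2)) c
          (inv_pos.mpr hkpos)]
        rw [smul_eq_mul, inv_inv, mul_comm c k⁻¹, inv_mul_eq_div]
    _ = k * (Real.sqrt Real.pi / 2 * erfc (c / k)) := by
        rw [integral_exp_neg_sq_Ioi]
    _ = k * (Real.sqrt Real.pi / 2) * erfc (c / k) := by ring

theorem sfma_marginalization (σ2 γ η r : ℝ) (hσ : 0 < σ2) (hγ : 0 < γ) (hη : 0 < η) :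
    (∫ v in Set.Ioi (0:ℝ), ∫ u : ℝ,
        Real.exp (-(r - u + v) ^ 2 / (2 * σ2) - u ^ 2 / (2 * γ) - v ^ 2 / (2 * η)))
      = Real.pi * Real.sqrt σ2 * Real.sqrt (γ * η) / Real.sqrt (σ2 + γ + η)
          * Real.exp (-r ^ 2 / (2 * (σ2 + γ + η)))
          * erfc (Real.sqrt η * r / Real.sqrt (2 * (γ + σ2) * (σ2 + γ + η))) := by
  set a := σ2 + γ with ha
  have hapos : 0 < a := by positivity
  set V := σ2 + γ + η with hV
  have hVpos : 0 < V := by positivity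
  set α := a / (2 * σ2 * γ) with hα
  have hαpos : 0 < α := by positivity
  -- inner integral
  have inner : ∀ v : ℝ, ∫ u : ℝ,
      Real.exp (-(r - u + v) ^ 2 / (2 * σ2) - u ^ 2 / (2 * γ) - v ^ 2 / (2 * η))
      = Real.sqrt (Real.pi / α)
        * Real.exp (-(r + v) ^ 2 / (2 * a) - v ^ 2 / (2 * η)) := by
    intro v
    have hrw : ∀ u : ℝ,
        Real.exp (-(r - u + v) ^ 2 / (2 * σ2) - u ^ 2 / (2 * γ) - v ^ 2 / (2 * η))
        = Real.exp (-α * (u - γ * (r + v) / a) ^ 2)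
          * Real.exp (-(r + v) ^ 2 / (2 * a) - v ^ 2 / (2 * η)) := by
      intro u
      rw [← Real.exp_add]
      congr 1
      rw [hα, ha]
      field_simp
      ring
    simp_rw [hrw]
    rw [integral_mul_const, gauss_shift _ _ hαpos]
  rw [setIntegral_congr_fun measurableSet_Ioi fun v _ => inner v]
  -- outer exponent rewrite
  set s := a * η / V with hs
  have hspos : 0 < s := by positivity
  set c := η * r / V with hc
  have hrw2 : ∀ v : ℝ,
      Real.sqrt (Real.pi / α) * Real.exp (-(r + v) ^ 2 / (2 * a) - v ^ 2 / (2 * η))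
      = Real.sqrt (Real.pi / α) * Real.exp (-r ^ 2 / (2 * V))
        * Real.exp (-(v + c) ^ 2 / (2 * s)) := by
    intro v
    rw [mul_assoc, ← Real.exp_add]
    congr 2
    rw [hs, hc, hV, ha]
    field_simp
    ring
  rw [setIntegral_congr_fun measurableSet_Ioi fun v _ => hrw2 v, integral_const_mul,
    gauss_half s c hspos]
  -- constants
  have hcval : c / Real.sqrt (2 * s)
      = Real.sqrt η * r / Real.sqrt (2 * (γ + σ2) * (σ2 + γ + η)) := by
    rw [hc, hs]
    rw [show (2 : ℝ) * (a * η / V) = η * (2 * a / V) by ring,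
      Real.sqrt_mul hη.le]
    have h1 : Real.sqrt (2 * (γ + σ2) * (σ2 + γ + η))
        = Real.sqrt (2 * a / V) * V := by
      rw [show (2 : ℝ) * (γ + σ2) * (σ2 + γ + η) = 2 * a / V * V ^ 2 by
        rw [ha, hV]; field_simp; ring, Real.sqrt_mul (by positivity),
        Real.sqrt_sq hVpos.le]
    rw [h1]
    have hsη : (0:ℝ) < Real.sqrt η := Real.sqrt_pos.mpr hη
    have hs2 : (0:ℝ) < Real.sqrt (2 * a / V) := Real.sqrt_pos.mpr (by positivity)
    rw [show η * r = Real.sqrt η * (Real.sqrt η * r) by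
      rw [← mul_assoc, Real.mul_self_sqrt hη.le]]
    field_simp
  rw [hcval]
  have hconst : Real.sqrt (Real.pi / α) * Real.exp (-r ^ 2 / (2 * V))
      * (Real.sqrt (2 * s) * (Real.sqrt Real.pi / 2)
        * erfc (Real.sqrt η * r / Real.sqrt (2 * (γ + σ2) * (σ2 + γ + η))))
      = (Real.sqrt (Real.pi / α) * Real.sqrt (2 * s) * (Real.sqrt Real.pi / 2))
        * Real.exp (-r ^ 2 / (2 * V))
        * erfc (Real.sqrt η * r / Real.sqrt (2 * (γ + σ2) * (σ2 + γ + η))) := by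
    ring
  rw [hconst]
  congr 2
  have hX : Real.pi / α * (2 * s) * Real.pi
      = 4 * (Real.pi ^ 2 * σ2 * (γ * η) / V) := by
    rw [hα, hs]
    field_simp
    ring
  have h1 : (0:ℝ) ≤ Real.pi / α := by positivity
  have h2 : (0:ℝ) ≤ Real.pi / α * (2 * s) := by positivity
  calc Real.sqrt (Real.pi / α) * Real.sqrt (2 * s) * (Real.sqrt Real.pi / 2)
      = Real.sqrt (Real.pi / α) * Real.sqrt (2 * s) * Real.sqrt Real.pi / 2 := by ring
    _ = Real.sqrt (Real.pi / α * (2 * s) * Real.pi) / 2 := by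
        rw [Real.sqrt_mul h2, Real.sqrt_mul h1]
    _ = Real.sqrt (4 * (Real.pi ^ 2 * σ2 * (γ * η) / V)) / 2 := by rw [hX]
    _ = Real.sqrt (Real.pi ^ 2 * σ2 * (γ * η) / V) := by
        rw [show (4:ℝ) = 2 ^ 2 by norm_num, Real.sqrt_mul (by positivity),
          Real.sqrt_sq (by norm_num : (0:ℝ) ≤ 2)]
        ring
    _ = Real.pi * Real.sqrt σ2 * Real.sqrt (γ * η) / Real.sqrt V := by
        rw [show Real.pi ^ 2 * σ2 * (γ * η) / V
            = Real.pi ^ 2 * (σ2 * ((γ * η) * V⁻¹)) by ring,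
          Real.sqrt_mul (by positivity), Real.sqrt_mul hσ.le,
          Real.sqrt_mul (by positivity), Real.sqrt_sq Real.pi_pos.le,
          Real.sqrt_inv]
        ring
end
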